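/- Let S be a Cu-semigroup satisfying O7, let w ∈ S, and let J ⊆ S be an ideal. Then the set {x ∈ S : x ∈ J and x ≤ w} is upward directed. -/
import Mathlib


open scoped ENNReal

namespace CuFormal

variable {S : Type*} [AddCommMonoid S] [PartialOrder S]

/-- The algebra-free way-below relation: `x ≪ y` iff whenever `y ≤ sup yₙ` for an
increasing sequence with supremum, then `x ≤ yₙ` for some `n`. -/
def WayBelow (x y : S) : Prop :=
  ∀ f : ℕ → S, Monotone f → ∀ s : S, IsLUB (Set.range f) s → y ≤ s → ∃ n, x ≤ f n

/-- Positively ordered monoid with addition monotone. -/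
def PosOrdered : Prop :=
  (∀ x : S, (0 : S) ≤ x) ∧ ∀ a b c : S, b ≤ c → a + b ≤ a + c

/-- O1: every increasing sequence has a supremum. -/
def AxO1 : Prop := ∀ f : ℕ → S, Monotone f → ∃ s : S, IsLUB (Set.range f) s

/-- O2: every element is the supremum of a ≪-increasing sequence. -/
def AxO2 : Prop := ∀ x : S, ∃ f : ℕ → S, Monotone f ∧
  (∀ n, WayBelow (f n) (f (n + 1))) ∧ IsLUB (Set.range f) x

/-- O3 -/
def AxO3 : Prop := ∀ x₁ y₁ x₂ y₂ : S,
  WayBelow x₁ y₁ → WayBelow x₂ y₂ → WayBelow (x₁ + x₂) (y₁ + y₂)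

/-- O4 -/
def AxO4 : Prop := ∀ f g : ℕ → S, Monotone f → Monotone g →
  ∀ a b : S, IsLUB (Set.range f) a → IsLUB (Set.range g) b →
    IsLUB (Set.range fun n => f n + g n) (a + b)

/-- A Cu-semigroup: positively ordered monoid satisfying O1–O4. -/
def CuSemigroup : Prop :=
  PosOrdered (S := S) ∧ AxO1 (S := S) ∧ AxO2 (S := S) ∧ AxO3 (S := S) ∧ AxO4 (S := S)

/-- O5 -/
def AxO5 : Prop := ∀ x' x y w' w : S, WayBelow x' x → x ≤ y → WayBelow w' w →
  x + w ≤ y → ∃ z : S, x' + z ≤ y ∧ y ≤ x + z ∧ WayBelow w' z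

/-- O6 -/
def AxO6 : Prop := ∀ x' x y z : S, WayBelow x' x → x ≤ y + z →
  ∃ y' z' : S, x' ≤ y' + z' ∧ y' ≤ x ∧ y' ≤ y ∧ z' ≤ x ∧ z' ≤ z

/-- O7 -/
def AxO7 : Prop := ∀ x₁' x₁ x₂' x₂ w : S,
  WayBelow x₁' x₁ → x₁ ≤ w → WayBelow x₂' x₂ → x₂ ≤ w →
  ∃ x : S, WayBelow x₁' x ∧ WayBelow x₂' x ∧ x ≤ w ∧ x ≤ x₁ + x₂

/-- An ideal: a downward hereditary subsemigroup closed under suprema of increasing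
sequences. -/
def IsIdeal (J : Set S) : Prop :=
  (0 : S) ∈ J ∧ (∀ x y : S, x ∈ J → y ∈ J → x + y ∈ J) ∧
  (∀ x y : S, y ∈ J → x ≤ y → x ∈ J) ∧
  (∀ f : ℕ → S, Monotone f → (∀ n, f n ∈ J) →
    ∀ s : S, IsLUB (Set.range f) s → s ∈ J)

/-- Countably based. -/
def CountablyBased : Prop := ∃ B : Set S, B.Countable ∧
  ∀ x : S, ∃ f : ℕ → S, (∀ n, f n ∈ B) ∧ Monotone f ∧
    (∀ n, WayBelow (f n) (f (n + 1))) ∧ IsLUB (Set.range f) x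

/-- A functional on `S`: preserves `0`, addition, order and suprema of increasing
sequences. -/
def IsFunctional (l : S → ℝ≥0∞) : Prop :=
  l 0 = 0 ∧ (∀ x y : S, l (x + y) = l x + l y) ∧ Monotone l ∧
  (∀ f : ℕ → S, Monotone f → ∀ s : S, IsLUB (Set.range f) s → l s = ⨆ n, l (f n))

/-- `(x̂ ∧ ŷ)(λ) = inf { λ₁(x) + λ₂(y) : λ = λ₁ + λ₂ }`. -/
noncomputable def hatInf (x y : S) (l : S → ℝ≥0∞) : ℝ≥0∞ :=
  sInf {t : ℝ≥0∞ | ∃ l₁ l₂ : S → ℝ≥0∞, IsFunctional l₁ ∧ IsFunctional l₂ ∧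
    (∀ u : S, l u = l₁ u + l₂ u) ∧ t = l₁ x + l₂ y}

/-- Edwards' condition for the functional `l`. -/
def EdwardsFor (l : S → ℝ≥0∞) : Prop := ∀ x y : S,
  hatInf x y l = sSup {t : ℝ≥0∞ | ∃ z : S, z ≤ x ∧ z ≤ y ∧ t = l z}

/-- The ideal generated by a subset. -/
def idealGen (X : Set S) : Set S := ⋂₀ {J : Set S | IsIdeal J ∧ X ⊆ J}


/-- In a Cu-semigroup satisfying O7, for any `w` and any ideal `J`,
the set `{x : x ∈ J, x ≤ w}` is upward directed. -/
theorem stmt7 {S : Type*} [AddCommMonoid S] [PartialOrder S]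
    (hCu : CuSemigroup (S := S)) (hO7 : AxO7 (S := S))
    (w : S) (J : Set S) (hJ : IsIdeal J) :
    DirectedOn (· ≤ ·) {x : S | x ∈ J ∧ x ≤ w} := by
  obtain ⟨⟨hpos, _hadd⟩, hO1, hO2, _hO3, _hO4⟩ := hCu
  obtain ⟨hJ0, hJadd, hJdown, hJsup⟩ := hJ
  -- way-below implies ≤
  have wb_le : ∀ a b : S, WayBelow a b → a ≤ b := by
    intro a b h
    have hlub : IsLUB (Set.range fun _ : ℕ => b) b := by
      simpa [Set.range_const] using isLUB_singleton (a := b)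
    obtain ⟨n, hn⟩ := h (fun _ => b) monotone_const b hlub le_rfl
    exact hn
  -- folding two way-below elements into a common one way-below-inside u
  have fold : ∀ a b u : S, WayBelow a u → WayBelow b u →
      ∃ z t : S, a ≤ z ∧ b ≤ z ∧ WayBelow z t ∧ t ≤ u := by
    intro a b u ha hb
    obtain ⟨h, hm, hw, hl⟩ := hO2 u
    obtain ⟨m1, hm1⟩ := ha h hm u hl le_rfl
    obtain ⟨m2, hm2⟩ := hb h hm u hl le_rfl
    exact ⟨h (max m1 m2), h (max m1 m2 + 1),
      le_trans hm1 (hm (le_max_left _ _)), le_trans hm2 (hm (le_max_right _ _)),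
      hw _, hl.1 (Set.mem_range_self _)⟩
  rintro x₁ ⟨hx₁J, hx₁w⟩ x₂ ⟨hx₂J, hx₂w⟩
  obtain ⟨f, hfmono, hfwb, hflub⟩ := hO2 x₁
  obtain ⟨g, hgmono, hgwb, hglub⟩ := hO2 x₂
  have hfw : ∀ n, f n ≤ w := fun n => le_trans (hflub.1 (Set.mem_range_self n)) hx₁w
  have hgw : ∀ n, g n ≤ w := fun n => le_trans (hglub.1 (Set.mem_range_self n)) hx₂w
  have hfJ : ∀ n, f n ∈ J := fun n => hJdown _ _ hx₁J (hflub.1 (Set.mem_range_self n))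
  have hgJ : ∀ n, g n ∈ J := fun n => hJdown _ _ hx₂J (hglub.1 (Set.mem_range_self n))
  -- the invariant
  set Inv : S × S → Prop := fun q => WayBelow q.1 q.2 ∧ q.2 ≤ w ∧ q.2 ∈ J with hInv
  have inv0 : Inv (0, 0) := by
    refine ⟨?_, hpos w, hJ0⟩
    intro seq _ s _ _
    exact ⟨0, hpos _⟩
  -- the inductive step
  have step : ∀ (n : ℕ) (p : {q : S × S // Inv q}),
      ∃ p' : {q : S × S // Inv q},
        p.1.1 ≤ p'.1.1 ∧ f n ≤ p'.1.1 ∧ g n ≤ p'.1.1 := by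
    rintro n ⟨⟨z, t⟩, hzt, htw, htJ⟩
    obtain ⟨u, huz, huf, huw, husum⟩ := hO7 z t (f n) (f (n + 1)) w hzt htw (hfwb n) (hfw (n + 1))
    have huJ : u ∈ J := hJdown _ _ (hJadd _ _ htJ (hfJ (n + 1))) husum
    obtain ⟨z₁, t₁, hzz₁, hfz₁, hz₁t₁, ht₁u⟩ := fold z (f n) u huz huf
    have ht₁w : t₁ ≤ w := le_trans ht₁u huw
    have ht₁J : t₁ ∈ J := hJdown _ _ huJ ht₁u
    obtain ⟨u₂, hu₂z₁, hu₂g, hu₂w, hu₂sum⟩ :=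
      hO7 z₁ t₁ (g n) (g (n + 1)) w hz₁t₁ ht₁w (hgwb n) (hgw (n + 1))
    have hu₂J : u₂ ∈ J := hJdown _ _ (hJadd _ _ ht₁J (hgJ (n + 1))) hu₂sum
    obtain ⟨z₂, t₂, hz₁z₂, hgz₂, hz₂t₂, ht₂u₂⟩ := fold z₁ (g n) u₂ hu₂z₁ hu₂g
    refine ⟨⟨(z₂, t₂), hz₂t₂, le_trans ht₂u₂ hu₂w, hJdown _ _ hu₂J ht₂u₂⟩,
      le_trans hzz₁ hz₁z₂, le_trans hfz₁ hz₁z₂, hgz₂⟩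
  choose next h1 h2 h3 using step
  -- build the sequence
  let F : ℕ → {q : S × S // Inv q} := fun n => Nat.rec ⟨(0, 0), inv0⟩ next n
  have hFsucc : ∀ n, F (n + 1) = next n (F n) := fun n => rfl
  set z : ℕ → S := fun n => (F n).1.1 with hz
  have hzmono : Monotone z := by
    apply monotone_nat_of_le_succ
    intro n
    have := h1 n (F n)
    simpa [hz, hFsucc n] using this
  have hzw : ∀ n, z n ≤ w := fun n =>
    le_trans (wb_le _ _ (F n).2.1) (F n).2.2.1
  have hzJ : ∀ n, z n ∈ J := fun n =>
    hJdown _ _ (F n).2.2.2 (wb_le _ _ (F n).2.1)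
  obtain ⟨s, hs⟩ := hO1 z hzmono
  have hsJ : s ∈ J := hJsup z hzmono hzJ s hs
  have hsw : s ≤ w := by
    apply hs.2
    rintro y ⟨n, rfl⟩
    exact hzw n
  have hx₁s : x₁ ≤ s := by
    apply hflub.2
    rintro y ⟨n, rfl⟩
    have hfn : f n ≤ z (n + 1) := by
      have := h2 n (F n); simpa [hz, hFsucc n] using this
    exact le_trans hfn (hs.1 ⟨n + 1, rfl⟩)
  have hx₂s : x₂ ≤ s := by
    apply hglub.2
    rintro y ⟨n, rfl⟩
    have hgn : g n ≤ z (n + 1) := by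
      have := h3 n (F n); simpa [hz, hFsucc n] using this
    exact le_trans hgn (hs.1 ⟨n + 1, rfl⟩)
  exact ⟨s, ⟨hsJ, hsw⟩, hx₁s, hx₂s⟩

end CuFormal
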